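/- Let R be a Jacobi-Tsankov algebraic curvature tensor and {x, z₁, z₂} an orthonormal set with J(x)z₁ = λ₁z₁ and J(x)z₂ = λ₂z₂ where λ₁ ≠ λ₂. Then J(z₁)z₂ = 0. -/
import Mathlib


open scoped InnerProductSpace
noncomputable section

variable {V : Type*} [NormedAddCommGroup V] [InnerProductSpace ℝ V]

/-- `R` satisfies the symmetries of an algebraic curvature tensor. -/
def IsCurvatureOperator (R : V →ₗ[ℝ] V →ₗ[ℝ] V →ₗ[ℝ] V) : Prop :=
  (∀ x y z w : V, ⟪R x y z, w⟫_ℝ = ⟪R z w x, y⟫_ℝ) ∧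
  (∀ x y z w : V, ⟪R x y z, w⟫_ℝ = - ⟪R y x z, w⟫_ℝ) ∧
  (∀ x y z w : V, ⟪R x y z, w⟫_ℝ + ⟪R y z x, w⟫_ℝ + ⟪R z x y, w⟫_ℝ = 0)

/-- The Jacobi operator `J(x) : y ↦ R(y,x)x`. -/
def Jacobi (R : V →ₗ[ℝ] V →ₗ[ℝ] V →ₗ[ℝ] V) (x : V) : V →ₗ[ℝ] V where
  toFun y := R y x x
  map_add' a b := by simp
  map_smul' c a := by simp

/-- The polarized Jacobi operator `J(x,y) : z ↦ ½R(z,x)y + ½R(z,y)x`. -/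
def JacobiP (R : V →ₗ[ℝ] V →ₗ[ℝ] V →ₗ[ℝ] V) (x y : V) : V →ₗ[ℝ] V where
  toFun z := (1/2 : ℝ) • R z x y + (1/2 : ℝ) • R z y x
  map_add' a b := by simp; module
  map_smul' c a := by simp; module

/-- `R` is Jacobi-Tsankov: Jacobi operators of orthogonal vectors commute. -/
def JacobiTsankov (R : V →ₗ[ℝ] V →ₗ[ℝ] V →ₗ[ℝ] V) : Prop :=
  ∀ x y : V, ⟪x, y⟫_ℝ = 0 → Jacobi R x ∘ₗ Jacobi R y = Jacobi R y ∘ₗ Jacobi R x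

theorem stmt12 [FiniteDimensional ℝ V] (hm : 3 ≤ Module.finrank ℝ V)
    (R : V →ₗ[ℝ] V →ₗ[ℝ] V →ₗ[ℝ] V) (hR : IsCurvatureOperator R)
    (hT : JacobiTsankov R) (x z₁ z₂ : V)
    (hx : ‖x‖ = 1) (hz1 : ‖z₁‖ = 1) (hz2 : ‖z₂‖ = 1)
    (hxz1 : ⟪x, z₁⟫_ℝ = 0) (hxz2 : ⟪x, z₂⟫_ℝ = 0) (hz12 : ⟪z₁, z₂⟫_ℝ = 0)
    (lam₁ lam₂ : ℝ) (h1 : Jacobi R x z₁ = lam₁ • z₁) (h2 : Jacobi R x z₂ = lam₂ • z₂)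
    (hne : lam₁ ≠ lam₂) :
    Jacobi R z₁ z₂ = 0 := by
  -- R a a z = 0
  have raa : ∀ a z : V, R a a z = 0 := by
    intro a z
    apply ext_inner_right ℝ
    intro w
    have h := hR.2.1 a a z w
    rw [inner_zero_left]
    linarith
  have Jez : ∀ s : ℝ, Jacobi R (z₂ + s • z₁) z₂ = 0 := by
    intro s
    set e := z₂ + s • z₁ with he
    have hxe : ⟪x, e⟫_ℝ = 0 := by
      rw [he, inner_add_right, inner_smul_right, hxz1, hxz2]; ring
    have hcomm := hT x e hxe
    have hee : Jacobi R e e = 0 := raa e e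
    have h5 : Jacobi R e (Jacobi R x e) = 0 := by
      have hc := congrArg (fun f : V →ₗ[ℝ] V => f e) hcomm
      simp only [LinearMap.comp_apply] at hc
      rw [hee, map_zero] at hc
      exact hc.symm
    have hJxe : Jacobi R x e = lam₂ • z₂ + (s * lam₁) • z₁ := by
      rw [he, map_add, map_smul, h1, h2, smul_smul]
    have e1 : lam₂ • Jacobi R e z₂ + (s * lam₁) • Jacobi R e z₁ = 0 := by
      rw [← map_smul, ← map_smul, ← map_add, ← hJxe]; exact h5
    have e2 : Jacobi R e z₂ + s • Jacobi R e z₁ = 0 := by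
      rw [← map_smul, ← map_add, ← he]; exact hee
    have hsub : (lam₂ - lam₁) • Jacobi R e z₂ = 0 := by
      have : (lam₂ - lam₁) • Jacobi R e z₂ =
          (lam₂ • Jacobi R e z₂ + (s * lam₁) • Jacobi R e z₁)
          - lam₁ • (Jacobi R e z₂ + s • Jacobi R e z₁) := by module
      rw [this, e1, e2, smul_zero, sub_zero]
    rcases smul_eq_zero.mp hsub with h | h
    · exact absurd (by linarith [sub_eq_zero.mp h] : lam₁ = lam₂) hne
    · exact h
  have key : ∀ s : ℝ, s • R z₂ z₁ z₂ + (s * s) • R z₂ z₁ z₁ = 0 := by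
    intro s
    have h := Jez s
    have hexp : Jacobi R (z₂ + s • z₁) z₂
        = s • R z₂ z₁ z₂ + (s * s) • R z₂ z₁ z₁ := by
      show R z₂ (z₂ + s • z₁) (z₂ + s • z₁) = _
      simp only [map_add, map_smul, LinearMap.add_apply, LinearMap.smul_apply, raa]
      module
    rw [← hexp]; exact h
  have k1 := key 1
  have k2 := key (-1)
  have h2v : (2 : ℝ) • R z₂ z₁ z₁ = 0 := by
    have : (2 : ℝ) • R z₂ z₁ z₁ =
        ((1:ℝ) • R z₂ z₁ z₂ + ((1:ℝ) * 1) • R z₂ z₁ z₁)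
        + ((-1:ℝ) • R z₂ z₁ z₂ + ((-1:ℝ) * (-1)) • R z₂ z₁ z₁) := by module
    rw [this, k1, k2, add_zero]
  have : R z₂ z₁ z₁ = 0 := by
    rcases smul_eq_zero.mp h2v with h | h
    · norm_num at h
    · exact h
  exact this
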